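/- A sequence (X_n) in E is L¹-uniformly integrable if and only if (i) (X_n) is bounded in every seminorm p_φ (i.e., sup_n p_φ(X_n) < ∞ for each φ), and (ii) for every φ and every ε > 0 there exists δ > 0 such that for every band projection P with p_φ(P e) ≤ δ one has p_φ(P|X_n|) < ε for all n. -/

import Mathlib

variable {E : Type*} [AddCommGroup E] [Lattice E]
  [CovariantClass E E (· + ·) (· ≤ ·)] [Module ℝ E]

/-- `E` is Dedekind complete. -/
def DedekindComplete (E : Type*) [AddCommGroup E] [Lattice E] : Prop :=
  ∀ A : Set E, A.Nonempty → BddAbove A → ∃ s, IsLUB A s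

/-- `e` is a weak order unit. -/
def IsWeakUnit (e : E) : Prop :=
  0 < e ∧ ∀ x : E, 0 ≤ x → IsLUB (Set.range fun n : ℕ => x ⊓ n • e) x

/-- A band (order) projection. -/
def IsBandProj (P : E →ₗ[ℝ] E) : Prop :=
  (∀ x, P (P x) = P x) ∧ ∀ x : E, 0 ≤ x → 0 ≤ P x ∧ P x ≤ x

/-- `P` is the band projection onto the band generated by `u ≥ 0`. -/
def IsProjOnBandGen (P : E →ₗ[ℝ] E) (u : E) : Prop :=
  IsBandProj P ∧ ∀ x : E, 0 ≤ x → IsLUB (Set.range fun n : ℕ => x ⊓ n • u) (P x)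

/-- A conditional expectation with respect to the weak order unit `e`. -/
def IsCondExp (e : E) (F : E →ₗ[ℝ] E) : Prop :=
  (∀ x, F (F x) = F x) ∧ (∀ x : E, 0 < x → 0 < F x) ∧ F e = e ∧
  ∀ V : ℕ → E, Antitone V → IsGLB (Set.range V) 0 →
    IsGLB (Set.range fun n => F (V n)) 0

/-- A positive, normalized, (sequentially) order continuous functional. -/
def IsNormedFunctional (e : E) (φ : E →ₗ[ℝ] ℝ) : Prop :=
  (∀ x : E, 0 ≤ x → 0 ≤ φ x) ∧ φ e = 1 ∧
  ∀ V : ℕ → E, Antitone V → IsGLB (Set.range V) 0 →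
    Filter.Tendsto (fun n => φ (V n)) Filter.atTop (nhds 0)

/-- `Φ` is a separating family of normalized positive order continuous functionals. -/
def IsSeparatingFamily (e : E) (Φ : Set (E →ₗ[ℝ] ℝ)) : Prop :=
  (∀ φ ∈ Φ, IsNormedFunctional e φ) ∧ ∀ x : E, (∀ φ ∈ Φ, φ x = 0) → x = 0

/-- The sequence `X` is `L¹`-uniformly integrable with respect to the family of band
projections `P n l` (the projection onto the band generated by `(|X n| - l • e)⁺`). -/
def UnifInt (F : E →ₗ[ℝ] E) (Φ : Set (E →ₗ[ℝ] ℝ)) (X : ℕ → E)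
    (P : ℕ → ℝ → (E →ₗ[ℝ] E)) : Prop :=
  ∀ φ ∈ Φ, ∀ ε : ℝ, 0 < ε → ∃ l₀ : ℝ, ∀ l : ℝ, l₀ ≤ l → ∀ n : ℕ,
    φ (F (P n l |X n|)) < ε

section AuxLemmas

set_option linter.unusedSectionVars false

lemma aux_inf_add_le {a b c : E} (ha : 0 ≤ a) (hb : 0 ≤ b) (hc : 0 ≤ c) :
    a ⊓ (b + c) ≤ a ⊓ b + a ⊓ c := by
  have h : a ⊓ b + a ⊓ c = ((a + a) ⊓ (a + c)) ⊓ ((b + a) ⊓ (b + c)) := by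
    rw [inf_add, add_inf, add_inf]
  rw [h]
  refine le_inf (le_inf ?_ ?_) (le_inf ?_ ?_)
  · exact inf_le_left.trans (le_add_of_nonneg_right ha)
  · exact inf_le_left.trans (le_add_of_nonneg_right hc)
  · exact inf_le_left.trans (le_add_of_nonneg_left hb)
  · exact inf_le_right

lemma aux_inf_nsmul {a b : E} (ha : 0 ≤ a) (hb : 0 ≤ b) (hab : a ⊓ b = 0) :
    ∀ k : ℕ, a ⊓ (k • b) = 0 := by
  intro k
  induction k with
  | zero => simpa using inf_eq_right.mpr ha
  | succ k ih =>
    have h1 : a ⊓ ((k + 1) • b) ≤ a ⊓ (k • b) + a ⊓ b := by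
      rw [succ_nsmul]
      exact aux_inf_add_le ha (nsmul_nonneg hb k) hb
    rw [ih, hab, add_zero] at h1
    exact le_antisymm h1 (le_inf ha (nsmul_nonneg hb _))

/-- The key identity: `Pn x - l • Pn e = (x - l • e) ⊔ 0`. -/
lemma aux_key {x : E} {l : ℝ} {e : E} {Pn : E →ₗ[ℝ] E}
    (hPn : IsProjOnBandGen Pn ((x - l • e) ⊔ 0)) :
    Pn x - l • Pn e = (x - l • e) ⊔ 0 := by
  set a := x - l • e with ha
  set u := a ⊔ 0 with hu
  set v := (-a) ⊔ 0 with hv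
  have hu0 : (0 : E) ≤ u := le_sup_right
  have hv0 : (0 : E) ≤ v := le_sup_right
  have hdisj : v ⊓ u = 0 := by
    have := posPart_inf_negPart_eq_zero a
    rw [posPart_def, negPart_def] at this
    rw [inf_comm]
    exact this
  have hPu : Pn u = u := by
    refine ((hPn.2 u hu0).unique ?_).symm.symm
    constructor
    · rintro _ ⟨k, rfl⟩; exact inf_le_left
    · intro b hb
      have h1 := hb (Set.mem_range_self 1)
      simpa [one_nsmul] using h1
  have hPv : Pn v = 0 := by
    refine (hPn.2 v hv0).unique ?_
    have : (fun k : ℕ => v ⊓ k • u) = fun _ => (0 : E) := by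
      funext k; exact aux_inf_nsmul hv0 hu0 hdisj k
    rw [this, Set.range_const]
    exact isLUB_singleton
  have hav : a = u - v := by
    have := posPart_sub_negPart a
    rw [posPart_def, negPart_def] at this
    rw [← this]
  have hPa : Pn a = u := by rw [hav, map_sub, hPu, hPv, sub_zero]
  rw [← map_smul, ← map_sub, ← ha, hPa]

/-- Chebyshev inequality. -/
lemma aux_cheb {x : E} {l : ℝ} {e : E} {Pn : E →ₗ[ℝ] E}
    (hPn : IsProjOnBandGen Pn ((x - l • e) ⊔ 0)) :
    l • Pn e ≤ Pn x := by
  have h := aux_key hPn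
  have : (0 : E) ≤ Pn x - l • Pn e := h ▸ le_sup_right
  exact sub_nonneg.mp this

/-- On the complement of the band, `x` is dominated by `l • e`. -/
lemma aux_sub_le_proj {x : E} {l : ℝ} {e : E} {Pn : E →ₗ[ℝ] E}
    (hPn : IsProjOnBandGen Pn ((x - l • e) ⊔ 0)) :
    x - Pn x ≤ l • e - l • Pn e := by
  have h := aux_key hPn
  have h1 : x - l • e ≤ Pn x - l • Pn e := h ▸ le_sup_left
  have := sub_le_sub_right (sub_le_sub_left h1 (x + l • e)) 0
  -- rearrange
  have h2 : x - Pn x ≤ l • e - l • Pn e := by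
    have h3 := add_le_add_right h1 (l • e - l • Pn e + Pn x - Pn x)
    calc x - Pn x = (x - l • e) + (l • e - Pn x) := by abel
    _ ≤ (Pn x - l • Pn e) + (l • e - Pn x) := add_le_add_left h1 _
    _ = l • e - l • Pn e := by abel
  exact h2

lemma aux_mono {T : E →ₗ[ℝ] E} (hT : ∀ z : E, 0 ≤ z → 0 ≤ T z)
    {x y : E} (h : x ≤ y) : T x ≤ T y := by
  have := hT (y - x) (sub_nonneg.mpr h)
  rw [map_sub] at this
  exact sub_nonneg.mp this

lemma aux_mono' {φ : E →ₗ[ℝ] ℝ} (hT : ∀ z : E, 0 ≤ z → 0 ≤ φ z)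
    {x y : E} (h : x ≤ y) : φ x ≤ φ y := by
  have := hT (y - x) (sub_nonneg.mpr h)
  rw [map_sub] at this
  linarith

lemma condExp_pos {e : E} {F : E →ₗ[ℝ] E} (hF : IsCondExp e F) :
    ∀ z : E, 0 ≤ z → 0 ≤ F z := by
  intro z hz
  rcases hz.lt_or_eq with h | h
  · exact (hF.2.1 z h).le
  · rw [← h, map_zero]

end AuxLemmas

/-- Characterization of `L¹`-uniform integrability: boundedness in each seminorm `p_φ`
together with uniform absolute continuity. -/
theorem unifInt_iff_bounded_and_absCont
    (hE : DedekindComplete E) (e : E) (he : IsWeakUnit e)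
    (F : E →ₗ[ℝ] E) (hF : IsCondExp e F)
    (Φ : Set (E →ₗ[ℝ] ℝ)) (hΦ : IsSeparatingFamily e Φ)
    (X : ℕ → E) (P : ℕ → ℝ → (E →ₗ[ℝ] E))
    (hP : ∀ n l, IsProjOnBandGen (P n l) ((|X n| - l • e) ⊔ 0)) :
    UnifInt F Φ X P ↔
      ((∀ φ ∈ Φ, ∃ M : ℝ, ∀ n, φ (F |X n|) ≤ M) ∧
       (∀ φ ∈ Φ, ∀ ε : ℝ, 0 < ε → ∃ δ : ℝ, 0 < δ ∧
         ∀ Q : E →ₗ[ℝ] E, IsBandProj Q → φ (F (Q e)) ≤ δ →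
           ∀ n, φ (F (Q |X n|)) < ε)) := by
  have hFpos := condExp_pos hF
  -- monotonicity of x ↦ φ (F x) for φ ∈ Φ
  have hmono : ∀ φ ∈ Φ, ∀ x y : E, x ≤ y → φ (F x) ≤ φ (F y) := by
    intro φ hφ x y hxy
    exact aux_mono' (hΦ.1 φ hφ).1 (aux_mono hFpos hxy)
  have hnn : ∀ φ ∈ Φ, ∀ x : E, 0 ≤ x → 0 ≤ φ (F x) := by
    intro φ hφ x hx
    exact (hΦ.1 φ hφ).1 _ (hFpos _ hx)
  constructor
  · intro h
    constructor
    · -- boundedness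
      intro φ hφ
      obtain ⟨l₀, hl₀⟩ := h φ hφ 1 one_pos
      set l : ℝ := max l₀ 0 with hldef
      have hl0 : (0 : ℝ) ≤ l := le_max_right _ _
      refine ⟨1 + l, fun n => ?_⟩
      have habsn : (0 : E) ≤ |X n| := abs_nonneg (X n)
      have hs := aux_sub_le_proj (hP n l)
      have h1 : |X n| ≤ P n l |X n| + (l • e - l • (P n l e)) := by
        have := add_le_add_left hs (P n l |X n|)
        calc |X n| = P n l |X n| + (|X n| - P n l |X n|) := by abel
        _ ≤ P n l |X n| + (l • e - l • (P n l e)) := add_le_add_right hs _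
      have h2 := hmono φ hφ _ _ h1
      rw [map_add, map_add, map_sub, map_smul, map_smul, map_sub, map_smul,
        map_smul, hF.2.2.1, smul_eq_mul, smul_eq_mul, (hΦ.1 φ hφ).2.1, mul_one] at h2
      have h3 := hl₀ l (le_max_left _ _) n
      have h4 : (0 : ℝ) ≤ φ (F (P n l e)) :=
        hnn φ hφ _ ((hP n l).1.2 e he.1.le).1
      have h5 : 0 ≤ l * φ (F (P n l e)) := mul_nonneg hl0 h4
      linarith
    · -- absolute continuity
      intro φ hφ ε hε
      obtain ⟨l₀, hl₀⟩ := h φ hφ (ε / 2) (by linarith)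
      set l : ℝ := max l₀ 0 with hldef
      have hl0 : (0 : ℝ) ≤ l := le_max_right _ _
      refine ⟨ε / (2 * (l + 1)), by positivity, ?_⟩
      intro Q hQ hQe n
      have habsn : (0 : E) ≤ |X n| := abs_nonneg (X n)
      have hPx := (hP n l).1.2 |X n| habsn
      have hQmono : ∀ x y : E, x ≤ y → Q x ≤ Q y :=
        fun x y hxy => aux_mono (fun z hz => (hQ.2 z hz).1) hxy
      have hs := aux_sub_le_proj (hP n l)
      have hkey : Q |X n| ≤ P n l |X n| + (l • Q e - l • Q (P n l e)) := by
        have hsplit : Q |X n| = Q (P n l |X n|) + Q (|X n| - P n l |X n|) := by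
          rw [← map_add]; congr 1; abel
        rw [hsplit]
        have h5 : Q (P n l |X n|) ≤ P n l |X n| := (hQ.2 _ hPx.1).2
        have h6 : Q (|X n| - P n l |X n|) ≤ Q (l • e - l • (P n l e)) :=
          hQmono _ _ hs
        have h6' : Q (l • e - l • (P n l e)) = l • Q e - l • Q (P n l e) := by
          rw [map_sub, map_smul, map_smul]
        rw [h6'] at h6
        exact add_le_add h5 h6
      have h7 := hmono φ hφ _ _ hkey
      rw [map_add, map_add, map_sub, map_smul, map_smul, map_sub, map_smul,
        map_smul, smul_eq_mul, smul_eq_mul] at h7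
      have h8 := hl₀ l (le_max_left _ _) n
      have hQPe : (0 : ℝ) ≤ φ (F (Q (P n l e))) :=
        hnn φ hφ _ (hQ.2 _ ((hP n l).1.2 e he.1.le).1).1
      have hQe' : (0 : ℝ) ≤ φ (F (Q e)) := hnn φ hφ _ (hQ.2 e he.1.le).1
      have h9 : l * φ (F (Q e)) ≤ l * (ε / (2 * (l + 1))) :=
        mul_le_mul_of_nonneg_left hQe hl0
      have h10 : l * (ε / (2 * (l + 1))) < ε / 2 := by
        rw [mul_div_assoc', div_lt_div_iff₀ (by positivity) two_pos]
        nlinarith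
      have h11 : 0 ≤ l * φ (F (Q (P n l e))) := mul_nonneg hl0 hQPe
      linarith
  · -- converse
    rintro ⟨hbdd, habs⟩ φ hφ ε hε
    obtain ⟨M, hM⟩ := hbdd φ hφ
    obtain ⟨δ, hδ, hδ'⟩ := habs φ hφ ε hε
    refine ⟨max (M / δ) 1, fun l hl n => ?_⟩
    have hl1 : (1 : ℝ) ≤ l := (le_max_right _ _).trans hl
    have hlpos : (0 : ℝ) < l := by linarith
    have hch := aux_cheb (hP n l)
    have habsn : (0 : E) ≤ |X n| := abs_nonneg (X n)
    have h1 := hmono φ hφ _ _ hch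
    rw [map_smul, map_smul, smul_eq_mul] at h1
    have h2 := hmono φ hφ _ _ ((hP n l).1.2 |X n| habsn).2
    have h3 : l * φ (F (P n l e)) ≤ M := le_trans h1 (le_trans h2 (hM n))
    have h4 : M ≤ l * δ := by
      have hll := (le_max_left (M / δ) 1).trans hl
      calc M = M / δ * δ := by field_simp
        _ ≤ l * δ := mul_le_mul_of_nonneg_right hll hδ.le
    have h5 : φ (F (P n l e)) ≤ δ := by
      have h6 := h3.trans h4
      exact le_of_mul_le_mul_left h6 hlpos
    exact hδ' (P n l) (hP n l).1 h5 n
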